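/- arXiv:2503.05792 — 6 statements merged into one kernel-verified Lean document; each statement's English description precedes it below -/
import Mathlib

section
/- Soundness of robustness-to-go for until over a finite time domain: if the inductive correspondence (s,t) ⊨ χ ⟺ ρ↬(s,t,t̂,χ) > 0 holds for χ ∈ {φ,ψ} at all times, and the time domain T is finite, then ρ↬(s,t,t̂,φ U_I ψ) > 0 if and only if there exists t' ∈ (I+t) ∩ T with ρ↬(s,t',t̂,ψ) > 0 and ρ↬(s,t'',t̂,φ) > 0 for all t'' ∈ [t,t') ∩ T; i.e., iff (s,t) ⊨ φ U_I ψ. -/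
open Classical

noncomputable section

/-- STL syntax over states of type `X`, with `untl a b` the until operator
over the time interval `[a, b]`. -/
inductive STL (X : Type) : Type
  | top : STL X
  | pred : (X → ℝ) → STL X
  | neg : STL X → STL X
  | conj : STL X → STL X → STL X
  | untl : ℝ → ℝ → STL X → STL X → STL X

namespace STL

variable {X : Type}

/-- Boolean "false". -/
def bot : STL X := neg top

/-- Disjunction, defined from negation and conjunction. -/
def disj (φ ψ : STL X) : STL X := neg (conj (neg φ) (neg ψ))

/-- Pointwise STL satisfaction over a (finite) time domain `T`. -/
def sat (T : Set ℝ) (s : ℝ → X) : STL X → ℝ → Prop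
  | top, _ => True
  | pred f, t => 0 < f (s t)
  | neg φ, t => ¬ sat T s φ t
  | conj φ ψ, t => sat T s φ t ∧ sat T s ψ t
  | untl a b φ ψ, t => ∃ t', t' ∈ T ∧ t' - t ∈ Set.Icc a b ∧ sat T s ψ t' ∧
      ∀ t'', t'' ∈ T → t ≤ t'' → t'' < t' → sat T s φ t''

/-- Ordinary STL robustness, valued in the extended reals. -/
noncomputable def rob (T : Set ℝ) (s : ℝ → X) : STL X → ℝ → EReal
  | top, _ => ⊤
  | pred f, t => (f (s t) : EReal)
  | neg φ, t => - rob T s φ t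
  | conj φ ψ, t => min (rob T s φ t) (rob T s ψ t)
  | untl a b φ ψ, t =>
      sSup ((fun t' => min (rob T s ψ t')
        (sInf ((fun t'' => rob T s φ t'') '' {u | u ∈ T ∧ t ≤ u ∧ u < t'}))) ''
        {u | u ∈ T ∧ u - t ∈ Set.Icc a b})

/-- STL robustness-to-go from threshold time `th`, valued in the extended reals.
Predicates evaluated at times `≤ th` contribute `±∞` according to their sign. -/
noncomputable def robToGo (T : Set ℝ) (s : ℝ → X) (th : ℝ) : STL X → ℝ → EReal
  | top, _ => ⊤
  | pred f, t =>
      if th < t then (f (s t) : EReal)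
      else (if 0 < f (s t) then (⊤ : EReal) else (⊥ : EReal))
  | neg φ, t => - robToGo T s th φ t
  | conj φ ψ, t => min (robToGo T s th φ t) (robToGo T s th ψ t)
  | untl a b φ ψ, t =>
      sSup ((fun t' => min (robToGo T s th ψ t')
        (sInf ((fun t'' => robToGo T s th φ t'') '' {u | u ∈ T ∧ t ≤ u ∧ u < t'}))) ''
        {u | u ∈ T ∧ u - t ∈ Set.Icc a b})

/-- STL formula progression by a time step `Δ` given observed state `x`.
The progressed until interval is `I ← Δ = (I - Δ) ∩ ℝ≥0`, i.e.
`[max (a - Δ) 0, b - Δ]` (which is empty, hence equivalent to `⊥`, when `b < Δ`). -/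
noncomputable def prog (Δ : ℝ) (x : X) : STL X → STL X
  | top => top
  | pred f => if 0 < f x then top else bot
  | neg φ => neg (prog Δ x φ)
  | conj φ ψ => conj (prog Δ x φ) (prog Δ x ψ)
  | untl a b φ ψ =>
      if 0 < a then conj (prog Δ x φ) (untl (max (a - Δ) 0) (b - Δ) φ ψ)
      else disj (prog Δ x ψ) (conj (prog Δ x φ) (untl (max (a - Δ) 0) (b - Δ) φ ψ))

/-- All until intervals in the formula have nonnegative left endpoints. -/
def intervalsNonneg : STL X → Prop
  | top => True
  | pred _ => True
  | neg φ => intervalsNonneg φ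
  | conj φ ψ => intervalsNonneg φ ∧ intervalsNonneg ψ
  | untl a _ φ ψ => 0 ≤ a ∧ intervalsNonneg φ ∧ intervalsNonneg ψ

/-- The convention that predicate values are never exactly zero on the time domain. -/
def nonzeroOn (T : Set ℝ) (s : ℝ → X) : STL X → Prop
  | top => True
  | pred f => ∀ t ∈ T, f (s t) ≠ 0
  | neg φ => nonzeroOn T s φ
  | conj φ ψ => nonzeroOn T s φ ∧ nonzeroOn T s ψ
  | untl _ _ φ ψ => nonzeroOn T s φ ∧ nonzeroOn T s ψ

/-- `tk` and `tk1` are consecutive sample times of the time domain `T`: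
both are samples, `tk < tk1`, and there is no sample strictly between them. -/
def Consecutive (T : Set ℝ) (tk tk1 : ℝ) : Prop :=
  tk ∈ T ∧ tk1 ∈ T ∧ tk < tk1 ∧ ∀ u ∈ T, u ≤ tk ∨ tk1 ≤ u

/-- The time horizon of a (bounded) STL formula. -/
def horizon : STL X → ℝ
  | top => 0
  | pred _ => 0
  | neg φ => horizon φ
  | conj φ ψ => max (horizon φ) (horizon ψ)
  | untl _ b φ ψ => b + max (horizon φ) (horizon ψ)

end STL

lemma sSup_pos_iff_aux {S : Set EReal} (hS : S.Finite) :
    0 < sSup S ↔ ∃ x ∈ S, 0 < x := by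
  constructor
  · intro h
    rcases S.eq_empty_or_nonempty with rfl | hne
    · simp at h
    · exact ⟨sSup S, hne.csSup_mem hS, h⟩
  · rintro ⟨x, hx, hx0⟩
    exact lt_of_lt_of_le hx0 (le_sSup hx)

lemma sInf_pos_iff_aux {S : Set EReal} (hS : S.Finite) :
    0 < sInf S ↔ ∀ x ∈ S, 0 < x := by
  constructor
  · intro h x hx
    exact lt_of_lt_of_le h (sInf_le hx)
  · intro h
    rcases S.eq_empty_or_nonempty with rfl | hne
    · simp
    · exact h _ (hne.csInf_mem hS)

/-- soundness of robustness-to-go for until over a finite time domain. -/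
theorem stmt4 {X : Type} (T : Set ℝ) (hT : T.Finite) (s : ℝ → X) (th : ℝ)
    (φ ψ : STL X) (a b t : ℝ)
    (hφ : ∀ u : ℝ, STL.sat T s φ u ↔ 0 < STL.robToGo T s th φ u)
    (hψ : ∀ u : ℝ, STL.sat T s ψ u ↔ 0 < STL.robToGo T s th ψ u) :
    (0 < STL.robToGo T s th (STL.untl a b φ ψ) t ↔
      ∃ t', t' ∈ T ∧ t' - t ∈ Set.Icc a b ∧ 0 < STL.robToGo T s th ψ t' ∧
        ∀ t'', t'' ∈ T → t ≤ t'' → t'' < t' → 0 < STL.robToGo T s th φ t'') ∧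
    (0 < STL.robToGo T s th (STL.untl a b φ ψ) t ↔
      STL.sat T s (STL.untl a b φ ψ) t) := by
  have key : 0 < STL.robToGo T s th (STL.untl a b φ ψ) t ↔
      ∃ t', t' ∈ T ∧ t' - t ∈ Set.Icc a b ∧ 0 < STL.robToGo T s th ψ t' ∧
        ∀ t'', t'' ∈ T → t ≤ t'' → t'' < t' → 0 < STL.robToGo T s th φ t'' := by
    show 0 < sSup _ ↔ _
    rw [sSup_pos_iff_aux]
    · constructor
      · rintro ⟨x, ⟨t', ⟨ht'T, ht'I⟩, rfl⟩, hx⟩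
        rw [lt_min_iff] at hx
        refine ⟨t', ht'T, ht'I, hx.1, ?_⟩
        intro t'' hT'' hle hlt
        have := (sInf_pos_iff_aux (Set.Finite.image _
          (hT.subset (fun u hu => hu.1)))).1 hx.2
        exact this _ ⟨t'', ⟨hT'', hle, hlt⟩, rfl⟩
      · rintro ⟨t', ht'T, ht'I, hψ0, hφ0⟩
        refine ⟨_, ⟨t', ⟨ht'T, ht'I⟩, rfl⟩, ?_⟩
        rw [lt_min_iff]
        refine ⟨hψ0, (sInf_pos_iff_aux (Set.Finite.image _
          (hT.subset (fun u hu => hu.1)))).2 ?_⟩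
        rintro x ⟨t'', ⟨hT'', hle, hlt⟩, rfl⟩
        exact hφ0 _ hT'' hle hlt
    · exact Set.Finite.image _ (hT.subset (fun u hu => hu.1))
  refine ⟨key, key.trans ?_⟩
  constructor
  · rintro ⟨t', h1, h2, h3, h4⟩
    exact ⟨t', h1, h2, (hψ t').2 h3, fun t'' ha hb hc => (hφ t'').2 (h4 t'' ha hb hc)⟩
  · rintro ⟨t', h1, h2, h3, h4⟩
    exact ⟨t', h1, h2, (hψ t').1 h3, fun t'' ha hb hc => (hφ t'').1 (h4 t'' ha hb hc)⟩

end
end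

section
/- Full soundness of robustness-to-go: for every STL formula φ (built from ⊤, predicates f(x)>0, negation, conjunction, and until), every signal s over a finite time domain, every time t in the domain, and every threshold t̂, the signal satisfies φ at t under pointwise semantics if and only if ρ↬(s,t,t̂,φ) > 0, and this equivalence holds regardless of the value of t̂ (under the convention that predicate values f(s(t)) are never exactly zero, or equivalently identifying non-satisfaction with ρ↬ ≤ 0). -/
open Classical

noncomputable section

lemma ereal_sInf_pos {A : Set EReal} (hA : A.Finite) (h : ∀ x ∈ A, 0 < x) :
    0 < sInf A := by
  rcases A.eq_empty_or_nonempty with rfl | hne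
  · simp
  · exact h _ (hne.csInf_mem hA)

lemma ereal_sSup_neg {A : Set EReal} (hA : A.Finite) (h : ∀ x ∈ A, x < 0) :
    sSup A < 0 := by
  rcases A.eq_empty_or_nonempty with rfl | hne
  · simp
  · exact h _ (hne.csSup_mem hA)

lemma key {X : Type} (T : Set ℝ) (hT : T.Finite) (s : ℝ → X) (th : ℝ) :
    ∀ φ : STL X, STL.nonzeroOn T s φ → ∀ t ∈ T,
      (STL.sat T s φ t → 0 < STL.robToGo T s th φ t) ∧
      (¬ STL.sat T s φ t → STL.robToGo T s th φ t < 0) := by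
  intro φ
  induction φ with
  | top =>
    intro _ t ht
    constructor
    · intro _; simp [STL.robToGo]
    · intro h; exact absurd trivial h
  | pred f =>
    intro hnz t ht
    simp only [STL.sat, STL.robToGo]
    constructor
    · intro h
      split
      · exact_mod_cast h
      · simp [h]
    · intro h
      split
      · have hlt : f (s t) < 0 := lt_of_le_of_ne (not_lt.mp h) (hnz t ht)
        exact_mod_cast hlt
      · simp [h]
  | neg φ ih =>
    intro hnz t ht
    obtain ⟨h1, h2⟩ := ih hnz t ht
    simp only [STL.sat, STL.robToGo]
    constructor
    · intro h
      have := h2 h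
      simpa using EReal.neg_lt_neg_iff.mpr this
    · intro h
      have := h1 (not_not.mp h)
      simpa using EReal.neg_lt_neg_iff.mpr this
  | conj φ ψ ihφ ihψ =>
    intro hnz t ht
    obtain ⟨hφ1, hφ2⟩ := ihφ hnz.1 t ht
    obtain ⟨hψ1, hψ2⟩ := ihψ hnz.2 t ht
    simp only [STL.sat, STL.robToGo]
    constructor
    · rintro ⟨ha, hb⟩
      exact lt_min (hφ1 ha) (hψ1 hb)
    · intro h
      rcases not_and_or.mp h with h | h
      · exact lt_of_le_of_lt (min_le_left _ _) (hφ2 h)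
      · exact lt_of_le_of_lt (min_le_right _ _) (hψ2 h)
  | untl a b φ ψ ihφ ihψ =>
    intro hnz t ht
    obtain ⟨hnφ, hnψ⟩ := hnz
    simp only [STL.sat, STL.robToGo]
    constructor
    · rintro ⟨t', ht'T, ht'I, hψ, hφ⟩
      have hmem : min (STL.robToGo T s th ψ t')
          (sInf ((fun t'' => STL.robToGo T s th φ t'') ''
            {u | u ∈ T ∧ t ≤ u ∧ u < t'})) ∈
          ((fun t' => min (STL.robToGo T s th ψ t')
            (sInf ((fun t'' => STL.robToGo T s th φ t'') ''
              {u | u ∈ T ∧ t ≤ u ∧ u < t'}))) '' {u | u ∈ T ∧ u - t ∈ Set.Icc a b}) :=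
        Set.mem_image_of_mem _ ⟨ht'T, ht'I⟩
      refine lt_of_lt_of_le (lt_min ?_ ?_) (le_sSup hmem)
      · exact (ihψ hnψ t' ht'T).1 hψ
      · refine ereal_sInf_pos ?_ ?_
        · exact ((hT.subset (fun u hu => hu.1)).image _)
        · rintro x ⟨u, ⟨huT, hu1, hu2⟩, rfl⟩
          exact (ihφ hnφ u huT).1 (hφ u huT hu1 hu2)
    · intro h
      push_neg at h
      refine ereal_sSup_neg ?_ ?_
      · exact ((hT.subset (fun u hu => hu.1)).image _)
      · rintro x ⟨t', ⟨ht'T, ht'I⟩, rfl⟩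
        by_cases hψs : STL.sat T s ψ t'
        · obtain ⟨u, huT, hu1, hu2, huns⟩ := h t' ht'T ht'I hψs
          have hx : STL.robToGo T s th φ u ∈
              ((fun t'' => STL.robToGo T s th φ t'') '' {u | u ∈ T ∧ t ≤ u ∧ u < t'}) :=
            Set.mem_image_of_mem _ ⟨huT, hu1, hu2⟩
          calc min (STL.robToGo T s th ψ t') _ ≤ _ := min_le_right _ _
            _ ≤ STL.robToGo T s th φ u := sInf_le hx
            _ < 0 := (ihφ hnφ u huT).2 huns
        · exact lt_of_le_of_lt (min_le_left _ _) ((ihψ hnψ t' ht'T).2 hψs)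

/-- full soundness of robustness-to-go, for every formula, every
finitely-sampled signal, every time in the domain, and every threshold, under the
convention that predicate values are never exactly zero on the domain. -/
theorem stmt5 {X : Type} (T : Set ℝ) (hT : T.Finite) (s : ℝ → X) (φ : STL X)
    (hnz : STL.nonzeroOn T s φ) (t : ℝ) (ht : t ∈ T) (th : ℝ) :
    STL.sat T s φ t ↔ 0 < STL.robToGo T s th φ t := by
  obtain ⟨h1, h2⟩ := key T hT s th φ hnz t ht
  exact ⟨h1, fun h => by_contra fun hn => absurd (h2 hn) (not_lt.mpr h.le)⟩

end
end

section
/- Robustness-to-go coincides with ordinary robustness in the past-free case: if t̂ < t_k, then for every STL formula φ and signal s over a finite time domain, ρ↬(s,t_k,t̂,φ) = ρ(s,t_k,φ). -/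
open Classical

noncomputable section

/-- robustness-to-go coincides with ordinary robustness when the
threshold lies strictly in the past (`th < tk`). -/
theorem stmt6 {X : Type} (T : Set ℝ) (hT : T.Finite) (s : ℝ → X) (φ : STL X)
    (hI : STL.intervalsNonneg φ) (th tk : ℝ) (h : th < tk) :
    STL.robToGo T s th φ tk = STL.rob T s φ tk := by
  induction φ generalizing tk with
  | top => rfl
  | pred f => simp [STL.robToGo, STL.rob, h]
  | neg φ ih => simp only [STL.robToGo, STL.rob, ih hI tk h]
  | conj φ ψ ihφ ihψ => simp only [STL.robToGo, STL.rob, ihφ hI.1 tk h, ihψ hI.2 tk h]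
  | untl a b φ ψ ihφ ihψ =>
    obtain ⟨ha, hIφ, hIψ⟩ := hI
    simp only [STL.robToGo, STL.rob]
    congr 1
    apply Set.image_congr
    rintro t' ⟨ht'T, ht'I⟩
    have ht' : th < t' := by have := ht'I.1; simp at this ⊢; linarith
    rw [ihψ hIψ t' ht']
    congr 1
    congr 1
    apply Set.image_congr
    rintro t'' ⟨_, htk, _⟩
    exact ihφ hIφ t'' (lt_of_lt_of_le h htk)

end
end

section
/- Until-rewrite identity for robustness-to-go: for consecutive sample times t_k < t_{k+1} of a finitely-sampled signal s and an interval I = ⟨a,b⟩ with a > 0, the quantity sup_{t' ∈ (I+t_k)∩T} min(ρ↬(s,t',t̂,ψ), inf_{t'' ∈ [t_{k+1},t')∩T} ρ↬(s,t'',t̂,φ)) equals ρ↬(s, t_{k+1}, t̂, φ U_{I←_Δ} ψ), where Δ = t_{k+1} − t_k and I←_Δ = (I − Δ) ∩ ℝ≥0. -/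
open Classical

noncomputable section

/-- until-rewrite identity for robustness-to-go, for consecutive
sample times `tk < tk1` and an interval with strictly positive left endpoint. -/
theorem stmt9 {X : Type} (T : Set ℝ) (hT : T.Finite) (s : ℝ → X) (th : ℝ)
    (φ ψ : STL X) (tk tk1 : ℝ) (hc : STL.Consecutive T tk tk1)
    (a b : ℝ) (ha : 0 < a) :
    sSup ((fun t' => min (STL.robToGo T s th ψ t')
        (sInf ((fun t'' => STL.robToGo T s th φ t'') ''
          {u | u ∈ T ∧ tk1 ≤ u ∧ u < t'}))) ''
        {u | u ∈ T ∧ u - tk ∈ Set.Icc a b}) =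
    STL.robToGo T s th
      (STL.untl (max (a - (tk1 - tk)) 0) (b - (tk1 - tk)) φ ψ) tk1 := by
  show _ = sSup _
  congr 1
  have hset : {u | u ∈ T ∧ u - tk ∈ Set.Icc a b} =
      {u | u ∈ T ∧ u - tk1 ∈ Set.Icc (max (a - (tk1 - tk)) 0) (b - (tk1 - tk))} := by
    obtain ⟨-, -, hlt, hsep⟩ := hc
    ext u
    simp only [Set.mem_setOf_eq, Set.mem_Icc]
    constructor
    · rintro ⟨hu, h1, h2⟩
      refine ⟨hu, ?_, by linarith⟩
      have : tk1 ≤ u := by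
        rcases hsep u hu with h | h
        · linarith
        · exact h
      exact max_le_iff.mpr ⟨by linarith, by linarith⟩
    · rintro ⟨hu, h1, h2⟩
      have := le_trans (le_max_left (a - (tk1 - tk)) 0) h1
      exact ⟨hu, by linarith, by linarith⟩
  rw [hset]

end
end

section
/- Decomposition of until robustness-to-go at the current step when 0 < I: for consecutive sample times t_k < t_{k+1} and interval I with strictly positive left endpoint, ρ↬(s,t_k,t̂,φ U_I ψ) = min( ρ↬(s,t_k,t̂,φ), ρ↬(s,t_{k+1},t̂, φ U_{I←_Δ} ψ) ), where Δ = t_{k+1}−t_k and I←_Δ = (I−Δ) ∩ ℝ≥0. -/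
open Classical

noncomputable section

/-- decomposition of until robustness-to-go at the current step
when the interval has strictly positive left endpoint (`0 < I`). -/
theorem stmt10 {X : Type} (T : Set ℝ) (hT : T.Finite) (s : ℝ → X) (th : ℝ)
    (φ ψ : STL X) (tk tk1 : ℝ) (hc : STL.Consecutive T tk tk1)
    (a b : ℝ) (ha : 0 < a) :
    STL.robToGo T s th (STL.untl a b φ ψ) tk =
    min (STL.robToGo T s th φ tk)
      (STL.robToGo T s th
        (STL.untl (max (a - (tk1 - tk)) 0) (b - (tk1 - tk)) φ ψ) tk1) := by
  obtain ⟨htk, htk1, hlt, hgap⟩ := hc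
  simp only [STL.robToGo]
  set r := STL.robToGo T s th with hr
  set Δ := tk1 - tk with hΔ
  have hS : {u | u ∈ T ∧ u - tk1 ∈ Set.Icc (max (a - Δ) 0) (b - Δ)}
      = {u | u ∈ T ∧ u - tk ∈ Set.Icc a b} := by
    ext u
    simp only [Set.mem_setOf_eq, Set.mem_Icc, max_le_iff]
    constructor
    · rintro ⟨hu, ⟨h1, h2⟩, h3⟩
      exact ⟨hu, by linarith, by linarith⟩
    · rintro ⟨hu, h1, h2⟩
      have htk1u : tk1 ≤ u := by
        rcases hgap u hu with h | h
        · linarith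
        · exact h
      exact ⟨hu, ⟨by linarith, by linarith⟩, by linarith⟩
  rw [hS]
  have himg : ∀ t' ∈ {u | u ∈ T ∧ u - tk ∈ Set.Icc a b},
      min (r ψ t') (sInf ((fun t'' => r φ t'') '' {u | u ∈ T ∧ tk ≤ u ∧ u < t'}))
      = min (r φ tk) (min (r ψ t')
          (sInf ((fun t'' => r φ t'') '' {u | u ∈ T ∧ tk1 ≤ u ∧ u < t'}))) := by
    rintro t' ⟨ht'T, hI⟩
    have ha' : a ≤ t' - tk := hI.1
    have htk1t' : tk1 ≤ t' := by
      rcases hgap t' ht'T with h | h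
      · linarith
      · exact h
    have hins : {u | u ∈ T ∧ tk ≤ u ∧ u < t'}
        = insert tk {u | u ∈ T ∧ tk1 ≤ u ∧ u < t'} := by
      ext u
      simp only [Set.mem_setOf_eq, Set.mem_insert_iff]
      constructor
      · rintro ⟨hu, h3, h4⟩
        rcases hgap u hu with h | h
        · left; linarith
        · right; exact ⟨hu, h, h4⟩
      · rintro (rfl | ⟨hu, h3, h4⟩)
        · exact ⟨htk, le_refl _, by linarith⟩
        · exact ⟨hu, by linarith, h4⟩
    rw [hins, Set.image_insert_eq, sInf_insert, min_left_comm]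
  rw [Set.image_congr himg]
  rw [sSup_image, inf_sSup_eq]
  simp only [iSup_image]


end
end

section
/- Decomposition of until robustness-to-go at the current step when 0 ∈ I: for consecutive sample times t_k < t_{k+1} and interval I = [0, b⟩ containing 0, ρ↬(s,t_k,t̂,φ U_I ψ) = max( ρ↬(s,t_k,t̂,ψ), min( ρ↬(s,t_k,t̂,φ), ρ↬(s,t_{k+1},t̂, φ U_{I←_Δ} ψ) ) ), where Δ = t_{k+1}−t_k and I←_Δ = (I−Δ) ∩ ℝ≥0. -/
open Classical

noncomputable section

lemma sSup_image_min_aux {α : Type*} (c : EReal) (g : α → EReal) (A : Set α) :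
    sSup ((fun u => min c (g u)) '' A) = min c (sSup (g '' A)) := by
  rw [sSup_image, sSup_image]
  show _ = c ⊓ _
  rw [inf_iSup_eq]
  refine iSup_congr fun u => ?_
  rw [inf_iSup_eq]

/-- decomposition of until robustness-to-go at the current step
when the interval `[0, b]` contains `0`. -/
theorem stmt11 {X : Type} (T : Set ℝ) (hT : T.Finite) (s : ℝ → X) (th : ℝ)
    (φ ψ : STL X) (tk tk1 : ℝ) (hc : STL.Consecutive T tk tk1)
    (b : ℝ) (hb : 0 ≤ b) :
    STL.robToGo T s th (STL.untl 0 b φ ψ) tk =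
    max (STL.robToGo T s th ψ tk)
      (min (STL.robToGo T s th φ tk)
        (STL.robToGo T s th
          (STL.untl (max (0 - (tk1 - tk)) 0) (b - (tk1 - tk)) φ ψ) tk1)) := by
  obtain ⟨htk, htk1, hlt, hgap⟩ := hc
  have hΔ : 0 < tk1 - tk := by linarith
  have hmax : max (0 - (tk1 - tk)) 0 = 0 := max_eq_right (by linarith)
  simp only [STL.robToGo, hmax]
  set ρφ : ℝ → EReal := STL.robToGo T s th φ with hρφ
  set ρψ : ℝ → EReal := STL.robToGo T s th ψ with hρψ
  set G : ℝ → EReal := fun t' =>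
    min (ρψ t') (sInf ((fun t'' => ρφ t'') '' {u | u ∈ T ∧ tk1 ≤ u ∧ u < t'})) with hG
  set S₁ : Set ℝ := {u | u ∈ T ∧ u - tk1 ∈ Set.Icc 0 (b - (tk1 - tk))} with hS₁
  have hS : {u | u ∈ T ∧ u - tk ∈ Set.Icc 0 b} = insert tk S₁ := by
    ext u
    simp only [hS₁, Set.mem_setOf_eq, Set.mem_insert_iff, Set.mem_Icc]
    constructor
    · rintro ⟨hu, h0, hub⟩
      rcases hgap u hu with h | h
      · exact Or.inl (le_antisymm h (by linarith))
      · exact Or.inr ⟨hu, by linarith, by linarith⟩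
    · rintro (rfl | ⟨hu, h1, h2⟩)
      · exact ⟨htk, by linarith, by linarith⟩
      · exact ⟨hu, by linarith, by linarith⟩
  have hempty : {u | u ∈ T ∧ tk ≤ u ∧ u < tk} = (∅ : Set ℝ) := by
    ext u
    simp only [Set.mem_setOf_eq, Set.mem_empty_iff_false, iff_false, not_and]
    intro _ h1 h2
    linarith
  have hIns : ∀ u, tk1 ≤ u →
      {v | v ∈ T ∧ tk ≤ v ∧ v < u} = insert tk {v | v ∈ T ∧ tk1 ≤ v ∧ v < u} := by
    intro u hu
    ext v
    simp only [Set.mem_setOf_eq, Set.mem_insert_iff]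
    constructor
    · rintro ⟨hv, h1, h2⟩
      rcases hgap v hv with h | h
      · exact Or.inl (le_antisymm h h1)
      · exact Or.inr ⟨hv, h, h2⟩
    · rintro (rfl | ⟨hv, h1, h2⟩)
      · exact ⟨htk, le_refl _, lt_of_lt_of_le hlt hu⟩
      · exact ⟨hv, by linarith, h2⟩
  have himg : ((fun t' =>
        min (ρψ t') (sInf ((fun t'' => ρφ t'') '' {u | u ∈ T ∧ tk ≤ u ∧ u < t'}))) '' S₁)
      = ((fun u => min (ρφ tk) (G u)) '' S₁) := by
    apply Set.image_congr
    intro u hu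
    have hu1 : tk1 ≤ u := by
      have := hu.2.1
      linarith [this]
    rw [hIns u hu1, Set.image_insert_eq, sInf_insert, hG]
    rw [min_left_comm]
  rw [hS, Set.image_insert_eq, sSup_insert, hempty, Set.image_empty, sInf_empty,
    himg, sSup_image_min_aux]
  rw [min_eq_left le_top]

end
end
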